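/- Let F be a field of characteristic p > 0, and let L and H be the (p+3)-dimensional Lie algebras of the previous context (L = A + Fλ + Fπ with [λ,x_i] = x_{i−1}, [π,x_i] = x_{i−p}; H = A + Fλ + Fz with [λ,x_i] = x_{i−1}, z central). Then the linear map Φ : L → U(H) which is the identity on A + Fλ and sends π to z + λ^p is a Lie algebra homomorphism into U(H), and its extension U(L) → U(H) is an algebra isomorphism. Hence U(L) ≅ U(H) although L ≇ H. -/

import Mathlib

open UniversalEnvelopingAlgebra
open UniversalEnvelopingAlgebra LinearMap LieAlgebra

section Aux
attribute [local instance 100] LieRing.ofAssociativeRing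
variable {F : Type*} [Field F] {p : ℕ}

lemma aux_nontrivial {H : Type*} [LieRing H] [LieAlgebra F H] :
    Nontrivial (UniversalEnvelopingAlgebra F H) := by
  have f : UniversalEnvelopingAlgebra F H →ₐ[F] F := lift F (0 : H →ₗ⁅F⁆ F)
  exact RingHom.domain_nontrivial f.toRingHom

lemma aux_pow_char_comm [CharP F p] (hp : p ≠ 0) {R : Type*} [Ring R] [Algebra F R]
    [Nontrivial R] (a w : R) :
    a ^ p * w - w * a ^ p = ((ad F R a) ^ p) w := by
  haveI : Fact p.Prime := ⟨(CharP.char_is_prime_or_zero F p).resolve_right hp⟩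
  haveI : CharP (Module.End F R) p := Module.charP_end ⟨1, (Submodule.eq_bot_iff _).mpr fun r h => by
    rw [Ideal.mem_torsionOf_iff] at h
    have h2 : algebraMap F R r = 0 := by rwa [Algebra.algebraMap_eq_smul_one]
    exact (algebraMap F R).injective (by simpa using h2)⟩
  have had : ad F R a = mulLeft F a - mulRight F a := by
    rw [ad_eq_lmul_left_sub_lmul_right]; rfl
  rw [had, sub_pow_char_of_commute p (commute_mulLeft_right a a),
    LinearMap.sub_apply, pow_mulLeft, pow_mulRight, mulLeft_apply, mulRight_apply]

lemma aux_ad_pow_ι {H : Type*} [LieRing H] [LieAlgebra F H] (w : H) (n : ℕ) (y : H) :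
    ((ad F (UniversalEnvelopingAlgebra F H) (ι F w)) ^ n) (ι F y)
      = ι F (((ad F H w) ^ n) y) := by
  induction n with
  | zero => simp
  | succ k ih =>
    rw [pow_succ', pow_succ', Module.End.mul_apply, Module.End.mul_apply, ih, ad_apply,
      ad_apply, ← LieHom.map_lie]

lemma aux_ad_chain {M : Type*} [LieRing M] [LieAlgebra F M] (lam : M) (x : Fin (p + 1) → M)
    (hx : ∀ i : Fin (p + 1), ⁅lam, x i⁆ = if (i : ℕ) = 0 then 0
      else x ⟨(i : ℕ) - 1, lt_of_le_of_lt (Nat.sub_le _ _) i.isLt⟩)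
    (k : ℕ) (i : Fin (p + 1)) :
    ((ad F M lam) ^ k) (x i) = if k ≤ (i : ℕ) then
      x ⟨(i : ℕ) - k, lt_of_le_of_lt (Nat.sub_le _ _) i.isLt⟩ else 0 := by
  induction k with
  | zero => simp
  | succ k ih =>
    rw [pow_succ', Module.End.mul_apply, ih]
    by_cases h : k ≤ (i : ℕ)
    · rw [if_pos h, ad_apply, hx]
      by_cases h2 : (i : ℕ) - k = 0
      · simp only [Fin.val_mk] at h2 ⊢
        rw [if_pos h2, if_neg (by omega)]
      · simp only [Fin.val_mk] at h2 ⊢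
        rw [if_neg h2, if_pos (by omega)]
        congr 1
    · rw [if_neg h, map_zero, if_neg (by omega)]


lemma aux_main [CharP F p] (hp : p ≠ 0) {H : Type*} [LieRing H] [LieAlgebra F H] (lam : H)
    (x : Fin (p + 1) → H)
    (hx : ∀ i : Fin (p + 1), ⁅lam, x i⁆ = if (i : ℕ) = 0 then 0
      else x ⟨(i : ℕ) - 1, lt_of_le_of_lt (Nat.sub_le _ _) i.isLt⟩)
    (i : Fin (p + 1)) :
    (ι F lam) ^ p * (ι F (x i)) - (ι F (x i)) * (ι F lam) ^ p
      = if (i : ℕ) = p then ι F (x ⟨0, Nat.succ_pos p⟩) else 0 := by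
  haveI : Nontrivial (UniversalEnvelopingAlgebra F H) := aux_nontrivial
  rw [aux_pow_char_comm (F := F) (R := UniversalEnvelopingAlgebra F H) hp, aux_ad_pow_ι,
    aux_ad_chain lam x hx p i]
  by_cases h : (i : ℕ) = p
  · rw [if_pos (by omega), if_pos h]
    congr 1
    congr 1
    exact Fin.ext (by simp only [Fin.val_mk]; omega)
  · rw [if_neg (by omega), map_zero, if_neg h]

lemma aux_basis_bilinear {M A : Type*} [LieRing M] [LieAlgebra F M] [Ring A] [Algebra F A]
    {ι' : Type*} (d : Module.Basis ι' F M) (f : M →ₗ[F] A)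
    (h : ∀ m n, f ⁅d m, d n⁆ = f (d m) * f (d n) - f (d n) * f (d m)) (u v : M) :
    f ⁅u, v⁆ = f u * f v - f v * f u := by
  let B1 : M →ₗ[F] M →ₗ[F] A := LinearMap.mk₂ F (fun u v => f ⁅u, v⁆)
    (fun a b c => by simp only [add_lie, map_add]) (fun s a c => by simp only [smul_lie, map_smul])
    (fun a b c => by simp only [lie_add, map_add]) (fun s a c => by simp only [lie_smul, map_smul])
  let B2 : M →ₗ[F] M →ₗ[F] A := LinearMap.mk₂ F (fun u v => f u * f v - f v * f u)
    (fun a b c => by simp only [map_add, add_mul, mul_add]; abel)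
    (fun s a c => by simp only [map_smul, smul_mul_assoc, mul_smul_comm, smul_sub])
    (fun a b c => by simp only [map_add, add_mul, mul_add]; abel)
    (fun s a c => by simp only [map_smul, smul_mul_assoc, mul_smul_comm, smul_sub])
  have hB : B1 = B2 := d.ext fun m => d.ext fun n => h m n
  have := DFunLike.congr_fun (DFunLike.congr_fun hB u) v
  simpa [B1, B2] using this

lemma aux_coord_lie {M : Type*} [LieRing M] [LieAlgebra F M] {ι' : Type*} [Fintype ι']
    [DecidableEq ι'] (d : Module.Basis ι' F M) (v u : M) (m0 : ι') :
    d.repr ⁅v, u⁆ m0 = ∑ m, d.repr u m * d.repr ⁅v, d m⁆ m0 := by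
  conv_lhs => rw [show ⁅v, u⁆ = ad F M v u from rfl, ← d.sum_repr u]
  rw [map_sum, map_sum, Finset.sum_apply']
  refine Finset.sum_congr rfl fun m _ => ?_
  rw [map_smul, ad_apply, map_smul, Finsupp.smul_apply, smul_eq_mul]


end Aux

lemma aux_center {F : Type*} [Field F] {p : ℕ} (hp2 : 2 ≤ p) {L : Type*} [LieRing L]
    [LieAlgebra F L] (b : Module.Basis (Fin (p + 1) ⊕ Bool) F L)
    (hLA : ∀ i j : Fin (p + 1), ⁅b (.inl i), b (.inl j)⁆ = 0)
    (hLlam : ∀ i : Fin (p + 1), ⁅b (.inr false), b (.inl i)⁆ =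
      if (i : ℕ) = 0 then 0
      else b (.inl ⟨(i : ℕ) - 1, lt_of_le_of_lt (Nat.sub_le _ _) i.isLt⟩))
    (hLpi : ∀ i : Fin (p + 1), ⁅b (.inr true), b (.inl i)⁆ =
      if (i : ℕ) = p then b (.inl ⟨0, Nat.succ_pos p⟩) else 0)
    (hLlampi : ⁅b (.inr false), b (.inr true)⁆ = 0)
    {u : L} (hcent : ∀ w : L, ⁅u, w⁆ = 0) :
    u = b.repr u (.inl ⟨0, Nat.succ_pos p⟩) • b (.inl ⟨0, Nat.succ_pos p⟩) := by
  have hv : ∀ v : L, ⁅v, u⁆ = 0 := fun v => by rw [← lie_skew, hcent, neg_zero]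
  -- coefficient of π vanishes
  have ht : b.repr u (.inr true) = 0 := by
    have h := aux_coord_lie b (b (.inl ⟨p, by omega⟩)) u (.inl ⟨0, Nat.succ_pos p⟩)
    rw [hv] at h
    simp only [map_zero, Finsupp.coe_zero, Pi.zero_apply] at h
    rw [Fintype.sum_sum_type, Fintype.sum_bool] at h
    have c1 : ∀ j : Fin (p+1), b.repr ⁅b (.inl ⟨p, by omega⟩), b (.inl j)⁆
        (.inl ⟨0, Nat.succ_pos p⟩) = 0 := fun j => by
      rw [hLA]; simp
    have c2 : b.repr ⁅b (.inl ⟨p, by omega⟩), b (.inr false)⁆ (.inl ⟨0, Nat.succ_pos p⟩) = 0 := by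
      rw [← lie_skew, hLlam, if_neg (by simp only [Fin.val_mk]; omega)]
      rw [map_neg, b.repr_self, Finsupp.neg_apply, Finsupp.single_apply,
        if_neg (by simp only [ne_eq, Sum.inl.injEq, Fin.mk.injEq]; omega), neg_zero]
    have c3 : b.repr ⁅b (.inl ⟨p, by omega⟩), b (.inr true)⁆ (.inl ⟨0, Nat.succ_pos p⟩) = -1 := by
      rw [← lie_skew, hLpi, if_pos (by simp only [Fin.val_mk])]
      rw [map_neg, b.repr_self, Finsupp.neg_apply, Finsupp.single_apply, if_pos rfl]
    rw [c2, c3] at h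
    simp only [c1, mul_zero, mul_neg, mul_one, Finset.sum_const_zero, zero_add, add_zero] at h
    exact neg_eq_zero.mp h.symm
  -- coefficient of λ vanishes
  have hf : b.repr u (.inr false) = 0 := by
    have h := aux_coord_lie b (b (.inl ⟨p, by omega⟩)) u (.inl ⟨p - 1, by omega⟩)
    rw [hv] at h
    simp only [map_zero, Finsupp.coe_zero, Pi.zero_apply] at h
    rw [Fintype.sum_sum_type, Fintype.sum_bool] at h
    have c1 : ∀ j : Fin (p+1), b.repr ⁅b (.inl ⟨p, by omega⟩), b (.inl j)⁆
        (.inl ⟨p - 1, by omega⟩) = 0 := fun j => by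
      rw [hLA]; simp
    have c2 : b.repr ⁅b (.inl ⟨p, by omega⟩), b (.inr false)⁆ (.inl ⟨p - 1, by omega⟩) = -1 := by
      rw [← lie_skew, hLlam, if_neg (by simp only [Fin.val_mk]; omega)]
      rw [map_neg, b.repr_self, Finsupp.neg_apply, Finsupp.single_apply,
        if_pos (by simp only [Sum.inl.injEq, Fin.mk.injEq, Fin.val_mk])]
    have c3 : b.repr ⁅b (.inl ⟨p, by omega⟩), b (.inr true)⁆ (.inl ⟨p - 1, by omega⟩) = 0 := by
      rw [← lie_skew, hLpi, if_pos (by simp only [Fin.val_mk])]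
      rw [map_neg, b.repr_self, Finsupp.neg_apply, Finsupp.single_apply,
        if_neg (by simp only [ne_eq, Sum.inl.injEq, Fin.mk.injEq]; omega), neg_zero]
    rw [c2, c3] at h
    simp only [c1, mul_zero, mul_neg, mul_one, Finset.sum_const_zero, zero_add, add_zero] at h
    exact neg_eq_zero.mp h.symm
  -- coefficients of x_j for j ≠ 0 vanish
  have hxj : ∀ j : Fin (p+1), (j : ℕ) ≠ 0 → b.repr u (.inl j) = 0 := by
    intro j hj
    have h := aux_coord_lie b (b (.inr false)) u (.inl ⟨(j : ℕ) - 1, by omega⟩)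
    rw [hv] at h
    simp only [map_zero, Finsupp.coe_zero, Pi.zero_apply] at h
    rw [Fintype.sum_sum_type, Fintype.sum_bool] at h
    have c1 : ∀ i : Fin (p+1), b.repr ⁅b (.inr false), b (.inl i)⁆ (.inl ⟨(j : ℕ) - 1, by omega⟩)
        = if i = j then 1 else 0 := by
      intro i
      rw [hLlam]
      by_cases hi : (i : ℕ) = 0
      · rw [if_pos hi, if_neg (by intro hij; exact hj (hij ▸ hi))]
        simp
      · rw [if_neg hi, b.repr_self]
        by_cases hij : i = j
        · subst hij
          rw [Finsupp.single_apply, if_pos rfl, if_pos rfl]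
        · have hij' : (i : ℕ) ≠ (j : ℕ) := fun hh => hij (Fin.ext hh)
          rw [Finsupp.single_eq_of_ne
            (by simp only [ne_eq, Sum.inl.injEq, Fin.mk.injEq]; omega), if_neg hij]
    have c2 : b.repr ⁅b (.inr false), b (.inr false)⁆ (.inl ⟨(j : ℕ) - 1, by omega⟩) = 0 := by
      rw [lie_self]; simp
    have c3 : b.repr ⁅b (.inr false), b (.inr true)⁆ (.inl ⟨(j : ℕ) - 1, by omega⟩) = 0 := by
      rw [hLlampi]; simp
    rw [c2, c3] at h
    simp only [c1, mul_ite, mul_one, mul_zero, Finset.sum_ite_eq', Finset.mem_univ, if_true,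
      zero_add, add_zero] at h
    exact h.symm
  -- conclude
  have hsum := b.sum_repr u
  rw [Fintype.sum_sum_type, Fintype.sum_bool, ht, hf, zero_smul, zero_smul, add_zero,
    add_zero] at hsum
  conv_lhs => rw [← hsum]
  apply Finset.sum_eq_single_of_mem (⟨0, Nat.succ_pos p⟩ : Fin (p + 1)) (Finset.mem_univ _)
  intro i _ hi
  rw [hxj i (fun hh => hi (Fin.ext hh)), zero_smul]


/-- with `L` and `H` the Lie algebras of Statement 14 (char `F = p > 0`;
`L` with basis `x_0, …, x_p, λ, π`, `[λ,x_i] = x_{i−1}`, `[π,x_i] = x_{i−p}`, `[λ,π] = 0`;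
`H` with basis `x_0, …, x_p, λ, z`, `[λ,x_i] = x_{i−1}`, `z` central), the linear map
`Φ : L → U(H)` which is the identity on `A + Fλ` and sends `π ↦ z + λ^p` is a Lie algebra
homomorphism into `U(H)` (with commutator bracket), its extension `U(L) → U(H)` is an algebra
isomorphism, and yet `L ≇ H`. -/
theorem envelopes_isomorphic_char_p (F : Type*) [Field F] (p : ℕ) (hp : p ≠ 0) [CharP F p]
    (L H : Type*) [LieRing L] [LieAlgebra F L] [LieRing H] [LieAlgebra F H]
    (b : Module.Basis (Fin (p + 1) ⊕ Bool) F L) (c : Module.Basis (Fin (p + 1) ⊕ Bool) F H)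
    (hLA : ∀ i j : Fin (p + 1), ⁅b (.inl i), b (.inl j)⁆ = 0)
    (hLlam : ∀ i : Fin (p + 1), ⁅b (.inr false), b (.inl i)⁆ =
      if (i : ℕ) = 0 then 0
      else b (.inl ⟨(i : ℕ) - 1, lt_of_le_of_lt (Nat.sub_le _ _) i.isLt⟩))
    (hLpi : ∀ i : Fin (p + 1), ⁅b (.inr true), b (.inl i)⁆ =
      if (i : ℕ) = p then b (.inl ⟨0, Nat.succ_pos p⟩) else 0)
    (hLlampi : ⁅b (.inr false), b (.inr true)⁆ = 0)
    (hHA : ∀ i j : Fin (p + 1), ⁅c (.inl i), c (.inl j)⁆ = 0)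
    (hHlam : ∀ i : Fin (p + 1), ⁅c (.inr false), c (.inl i)⁆ =
      if (i : ℕ) = 0 then 0
      else c (.inl ⟨(i : ℕ) - 1, lt_of_le_of_lt (Nat.sub_le _ _) i.isLt⟩))
    (hHz : ∀ y : H, ⁅c (.inr true), y⁆ = 0) :
    let Φ : L →ₗ[F] UniversalEnvelopingAlgebra F H := b.constr ℕ fun m =>
      match m with
      | .inl i => ι F (c (.inl i))
      | .inr false => ι F (c (.inr false))
      | .inr true => ι F (c (.inr true)) + (ι F (c (.inr false))) ^ p
    -- Φ is a Lie algebra homomorphism into U(H) with the commutator bracket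
    (∀ u v : L, Φ ⁅u, v⁆ = Φ u * Φ v - Φ v * Φ u) ∧
    -- its extension to U(L) is an algebra isomorphism U(L) ≅ U(H)
    (∃ e : UniversalEnvelopingAlgebra F L ≃ₐ[F] UniversalEnvelopingAlgebra F H,
      ∀ a : L, e (ι F a) = Φ a) ∧
    -- although L and H are not isomorphic Lie algebras
    ¬Nonempty (L ≃ₗ⁅F⁆ H) := by
  intro Φ
  letI : LieRing (UniversalEnvelopingAlgebra F H) := LieRing.ofAssociativeRing
  letI : LieRing (UniversalEnvelopingAlgebra F L) := LieRing.ofAssociativeRing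
  have hprime : p.Prime := (CharP.char_is_prime_or_zero F p).resolve_right hp
  have hp2 : 2 ≤ p := hprime.two_le
  have hΦl : ∀ i : Fin (p + 1), Φ (b (.inl i)) = ι F (c (.inl i)) := fun i =>
    b.constr_basis ℕ _ _
  have hΦf : Φ (b (.inr false)) = ι F (c (.inr false)) := b.constr_basis ℕ _ _
  have hΦt : Φ (b (.inr true)) = ι F (c (.inr true)) + (ι F (c (.inr false))) ^ p :=
    b.constr_basis ℕ _ _
  have key1 : ∀ u v : L, Φ ⁅u, v⁆ = Φ u * Φ v - Φ v * Φ u := by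
    refine aux_basis_bilinear b Φ ?_
    have skew : ∀ m n, (Φ ⁅b m, b n⁆ = Φ (b m) * Φ (b n) - Φ (b n) * Φ (b m)) →
        Φ ⁅b n, b m⁆ = Φ (b n) * Φ (b m) - Φ (b m) * Φ (b n) := by
      intro m n hmn
      rw [← lie_skew, map_neg, hmn]
      abel
    have diag : ∀ m, Φ ⁅b m, b m⁆ = Φ (b m) * Φ (b m) - Φ (b m) * Φ (b m) := fun m => by
      rw [lie_self, map_zero, sub_self]
    have cAA : ∀ i j : Fin (p + 1), Φ ⁅b (.inl i), b (.inl j)⁆ =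
        Φ (b (.inl i)) * Φ (b (.inl j)) - Φ (b (.inl j)) * Φ (b (.inl i)) := by
      intro i j
      rw [hLA, map_zero, hΦl, hΦl, ← Ring.lie_def, ← LieHom.map_lie, hHA, map_zero]
    have cFA : ∀ i : Fin (p + 1), Φ ⁅b (.inr false), b (.inl i)⁆ =
        Φ (b (.inr false)) * Φ (b (.inl i)) - Φ (b (.inl i)) * Φ (b (.inr false)) := by
      intro i
      rw [hΦf, hΦl, ← Ring.lie_def, ← LieHom.map_lie, hHlam, hLlam]
      split_ifs
      · rw [map_zero, map_zero]
      · exact hΦl _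
    have cTA : ∀ i : Fin (p + 1), Φ ⁅b (.inr true), b (.inl i)⁆ =
        Φ (b (.inr true)) * Φ (b (.inl i)) - Φ (b (.inl i)) * Φ (b (.inr true)) := by
      intro i
      have h1 : ι F (c (.inr true)) * ι F (c (.inl i)) -
          ι F (c (.inl i)) * ι F (c (.inr true)) = 0 := by
        rw [← Ring.lie_def, ← LieHom.map_lie, hHz, map_zero]
      have h2 := aux_main (F := F) hp (c (.inr false)) (fun j => c (.inl j)) hHlam i
      rw [hLpi, hΦt, hΦl]
      have expand : ∀ z q X : UniversalEnvelopingAlgebra F H,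
          (z + q) * X - X * (z + q) = (z * X - X * z) + (q * X - X * q) := by
        intros; noncomm_ring
      rw [expand, h1, h2, zero_add]
      split_ifs
      · exact hΦl _
      · rw [map_zero]
    have cFT : Φ ⁅b (.inr false), b (.inr true)⁆ =
        Φ (b (.inr false)) * Φ (b (.inr true)) - Φ (b (.inr true)) * Φ (b (.inr false)) := by
      have h1 : ι F (c (.inr false)) * ι F (c (.inr true)) -
          ι F (c (.inr true)) * ι F (c (.inr false)) = 0 := by
        rw [← Ring.lie_def, ← LieHom.map_lie, ← lie_skew, hHz, neg_zero, map_zero]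
      have h2 : ι F (c (.inr false)) * (ι F (c (.inr false))) ^ p -
          (ι F (c (.inr false))) ^ p * ι F (c (.inr false)) = 0 :=
        sub_eq_zero_of_eq ((Commute.refl _).pow_right p).eq
      rw [hLlampi, map_zero, hΦf, hΦt]
      have expand : ∀ a z q : UniversalEnvelopingAlgebra F H,
          a * (z + q) - (z + q) * a = (a * z - z * a) + (a * q - q * a) := by
        intros; noncomm_ring
      rw [expand, h1, h2, add_zero]
    rintro (i | mb) (j | nb)
    · exact cAA i j
    · cases nb
      · exact skew _ _ (cFA i)
      · exact skew _ _ (cTA i)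
    · cases mb
      · exact cFA j
      · exact cTA j
    · cases mb <;> cases nb
      · exact diag _
      · exact cFT
      · exact skew _ _ cFT
      · exact diag _
  refine ⟨key1, ?_, ?_⟩
  · -- the algebra isomorphism
    let ΦLie : L →ₗ⁅F⁆ UniversalEnvelopingAlgebra F H :=
      { Φ with map_lie' := fun {u v} => by rw [Ring.lie_def]; exact key1 u v }
    let Ψ : H →ₗ[F] UniversalEnvelopingAlgebra F L := c.constr ℕ fun m =>
      match m with
      | .inl i => ι F (b (.inl i))
      | .inr false => ι F (b (.inr false))
      | .inr true => ι F (b (.inr true)) - (ι F (b (.inr false))) ^ p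
    have hΨl : ∀ i : Fin (p + 1), Ψ (c (.inl i)) = ι F (b (.inl i)) := fun i =>
      c.constr_basis ℕ _ _
    have hΨf : Ψ (c (.inr false)) = ι F (b (.inr false)) := c.constr_basis ℕ _ _
    have hΨt : Ψ (c (.inr true)) = ι F (b (.inr true)) - (ι F (b (.inr false))) ^ p :=
      c.constr_basis ℕ _ _
    have key2 : ∀ u v : H, Ψ ⁅u, v⁆ = Ψ u * Ψ v - Ψ v * Ψ u := by
      refine aux_basis_bilinear c Ψ ?_
      have skew : ∀ m n, (Ψ ⁅c m, c n⁆ = Ψ (c m) * Ψ (c n) - Ψ (c n) * Ψ (c m)) →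
          Ψ ⁅c n, c m⁆ = Ψ (c n) * Ψ (c m) - Ψ (c m) * Ψ (c n) := by
        intro m n hmn
        rw [← lie_skew, map_neg, hmn]
        abel
      have diag : ∀ m, Ψ ⁅c m, c m⁆ = Ψ (c m) * Ψ (c m) - Ψ (c m) * Ψ (c m) := fun m => by
        rw [lie_self, map_zero, sub_self]
      have cAA : ∀ i j : Fin (p + 1), Ψ ⁅c (.inl i), c (.inl j)⁆ =
          Ψ (c (.inl i)) * Ψ (c (.inl j)) - Ψ (c (.inl j)) * Ψ (c (.inl i)) := by
        intro i j
        rw [hHA, map_zero, hΨl, hΨl, ← Ring.lie_def, ← LieHom.map_lie, hLA, map_zero]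
      have cFA : ∀ i : Fin (p + 1), Ψ ⁅c (.inr false), c (.inl i)⁆ =
          Ψ (c (.inr false)) * Ψ (c (.inl i)) - Ψ (c (.inl i)) * Ψ (c (.inr false)) := by
        intro i
        rw [hΨf, hΨl, ← Ring.lie_def, ← LieHom.map_lie, hLlam, hHlam]
        split_ifs
        · rw [map_zero, map_zero]
        · exact hΨl _
      have cTA : ∀ i : Fin (p + 1), Ψ ⁅c (.inr true), c (.inl i)⁆ =
          Ψ (c (.inr true)) * Ψ (c (.inl i)) - Ψ (c (.inl i)) * Ψ (c (.inr true)) := by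
        intro i
        have h1 : ι F (b (.inr true)) * ι F (b (.inl i)) -
            ι F (b (.inl i)) * ι F (b (.inr true)) =
            if (i : ℕ) = p then ι F (b (.inl ⟨0, Nat.succ_pos p⟩)) else 0 := by
          rw [← Ring.lie_def, ← LieHom.map_lie, hLpi]
          split_ifs
          · rfl
          · exact map_zero (ι F)
        have h2 := aux_main (F := F) hp (b (.inr false)) (fun j => b (.inl j)) hLlam i
        rw [hHz, map_zero, hΨt, hΨl]
        have expand : ∀ w q X : UniversalEnvelopingAlgebra F L,
            (w - q) * X - X * (w - q) = (w * X - X * w) - (q * X - X * q) := by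
          intros; noncomm_ring
        rw [expand, h1, h2, sub_self]
      have cTF : Ψ ⁅c (.inr true), c (.inr false)⁆ =
          Ψ (c (.inr true)) * Ψ (c (.inr false)) - Ψ (c (.inr false)) * Ψ (c (.inr true)) := by
        have h1 : ι F (b (.inr true)) * ι F (b (.inr false)) -
            ι F (b (.inr false)) * ι F (b (.inr true)) = 0 := by
          rw [← Ring.lie_def, ← LieHom.map_lie, ← lie_skew, hLlampi, neg_zero, map_zero]
        have h2 : (ι F (b (.inr false))) ^ p * ι F (b (.inr false)) -
            ι F (b (.inr false)) * (ι F (b (.inr false))) ^ p = 0 :=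
          sub_eq_zero_of_eq ((Commute.refl _).pow_left p).eq
        rw [hHz, map_zero, hΨt, hΨf]
        have expand : ∀ w q a : UniversalEnvelopingAlgebra F L,
            (w - q) * a - a * (w - q) = (w * a - a * w) - (q * a - a * q) := by
          intros; noncomm_ring
        rw [expand, h1, h2, sub_zero]
      rintro (i | mb) (j | nb)
      · exact cAA i j
      · cases nb
        · exact skew _ _ (cFA i)
        · exact skew _ _ (cTA i)
      · cases mb
        · exact cFA j
        · exact cTA j
      · cases mb <;> cases nb
        · exact diag _
        · exact skew _ _ cTF
        · exact cTF
        · exact diag _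
    let ΨLie : H →ₗ⁅F⁆ UniversalEnvelopingAlgebra F L :=
      { Ψ with map_lie' := fun {u v} => by rw [Ring.lie_def]; exact key2 u v }
    have hfι : ∀ u : L, lift F ΦLie (ι F u) = Φ u := fun u => lift_ι_apply F ΦLie u
    have hgι : ∀ y : H, lift F ΨLie (ι F y) = Ψ y := fun y => lift_ι_apply F ΨLie y
    have hgf : ∀ u : L, lift F ΨLie (lift F ΦLie (ι F u)) = ι F u := by
      have hbasis : ∀ m, lift F ΨLie (lift F ΦLie (ι F (b m))) = ι F (b m) := by
        rintro (i | mb)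
        · rw [hfι, hΦl, hgι, hΨl]
        · cases mb
          · rw [hfι, hΦf, hgι, hΨf]
          · rw [hfι, hΦt, map_add, map_pow, hgι, hgι, hΨt, hΨf, sub_add_cancel]
      intro u
      have heq := Module.Basis.ext (b := b)
        (f₁ := ((lift F ΨLie).toLinearMap.comp (lift F ΦLie).toLinearMap).comp
          (ι F : L →ₗ⁅F⁆ UniversalEnvelopingAlgebra F L).toLinearMap)
        (f₂ := (ι F : L →ₗ⁅F⁆ UniversalEnvelopingAlgebra F L).toLinearMap)
        (fun m => hbasis m)
      exact LinearMap.congr_fun heq u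
    have hfg : ∀ y : H, lift F ΦLie (lift F ΨLie (ι F y)) = ι F y := by
      have hbasis : ∀ m, lift F ΦLie (lift F ΨLie (ι F (c m))) = ι F (c m) := by
        rintro (i | mb)
        · rw [hgι, hΨl, hfι, hΦl]
        · cases mb
          · rw [hgι, hΨf, hfι, hΦf]
          · rw [hgι, hΨt, map_sub, map_pow, hfι, hfι, hΦt, hΦf, add_sub_cancel_right]
      intro y
      have heq := Module.Basis.ext (b := c)
        (f₁ := ((lift F ΦLie).toLinearMap.comp (lift F ΨLie).toLinearMap).comp
          (ι F : H →ₗ⁅F⁆ UniversalEnvelopingAlgebra F H).toLinearMap)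
        (f₂ := (ι F : H →ₗ⁅F⁆ UniversalEnvelopingAlgebra F H).toLinearMap)
        (fun m => hbasis m)
      exact LinearMap.congr_fun heq y
    refine ⟨AlgEquiv.ofAlgHom (lift F ΦLie) (lift F ΨLie) ?_ ?_, ?_⟩
    · apply UniversalEnvelopingAlgebra.hom_ext
      apply LieHom.ext
      intro y
      simpa using hfg y
    · apply UniversalEnvelopingAlgebra.hom_ext
      apply LieHom.ext
      intro u
      simpa using hgf u
    · intro a
      exact hfι a
  · -- L and H are not isomorphic
    rintro ⟨e⟩
    have hx0H : ∀ y : H, ⁅c (.inl ⟨0, Nat.succ_pos p⟩), y⁆ = 0 := by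
      intro y
      have hz : LieAlgebra.ad F H (c (.inl ⟨0, Nat.succ_pos p⟩)) = 0 := by
        apply c.ext
        rintro (j | mb)
        · rw [LinearMap.zero_apply, LieAlgebra.ad_apply, hHA]
        · cases mb
          · rw [LinearMap.zero_apply, LieAlgebra.ad_apply, ← lie_skew, hHlam, if_pos rfl,
              neg_zero]
          · rw [LinearMap.zero_apply, LieAlgebra.ad_apply, ← lie_skew, hHz, neg_zero]
      have h1 := LinearMap.congr_fun hz y
      rwa [LieAlgebra.ad_apply, LinearMap.zero_apply] at h1
    have hcent : ∀ y : H, (∀ y' : H, ⁅y, y'⁆ = 0) → ∀ w : L, ⁅e.symm y, w⁆ = 0 := by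
      intro y hy w
      have h1 := e.symm.map_lie y (e w)
      rw [hy, e.symm_apply_apply] at h1
      rw [← h1]
      exact map_zero e.symm.toLieHom
    have hα := aux_center hp2 b hLA hLlam hLpi hLlampi (hcent _ hx0H)
    have hβ := aux_center hp2 b hLA hLlam hLpi hLlampi (hcent _ hHz)
    set α := b.repr (e.symm (c (.inl ⟨0, Nat.succ_pos p⟩))) (.inl ⟨0, Nat.succ_pos p⟩) with hαdef
    set β := b.repr (e.symm (c (.inr true))) (.inl ⟨0, Nat.succ_pos p⟩) with hβdef
    have hcomb : β • e.symm (c (.inl ⟨0, Nat.succ_pos p⟩)) - α • e.symm (c (.inr true)) = 0 := by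
      rw [hα, hβ, smul_smul, smul_smul, mul_comm, sub_self]
    have h0 : β • c (.inl ⟨0, Nat.succ_pos p⟩) - α • c (.inr true) = 0 := by
      have h1 := congrArg e.toLinearEquiv hcomb
      rw [map_sub, map_smul, map_smul, map_zero] at h1
      have h2 : ∀ x, e.toLinearEquiv (e.symm x) = x := fun x => e.apply_symm_apply x
      rwa [h2, h2] at h1
    have hβ0 : β = 0 := by
      have h2 := congrArg (fun w => c.repr w (.inl ⟨0, Nat.succ_pos p⟩)) h0
      simpa [Finsupp.single_apply] using h2
    rw [hβ0, zero_smul] at hβ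
    have hzero : c (.inr true) = 0 := by
      have h3 := congrArg e.toLinearEquiv hβ
      rw [map_zero] at h3
      have h2 : ∀ x, e.toLinearEquiv (e.symm x) = x := fun x => e.apply_symm_apply x
      rwa [h2] at h3
    exact c.ne_zero _ hzero
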